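/- Let n ≥ 2, let y : Fin n → ℝ, and let μ ≥ 0. Define f : (Fin n → ℝ) → ℝ by f(x) = (1/2)·Σᵢ (x i − y i)² + μ·Σ_{i=1}^{n−1} (x i − x (i+1))². Then f is convex on ℝⁿ and f is submodular with respect to the componentwise order on Fin n → ℝ: f(x ⊔ x') + f(x ⊓ x') ≤ f(x) + f(x') for all x, x', where (x ⊔ x') i = max(x i, x' i) and (x ⊓ x') i = min(x i, x' i). -/

import Mathlib

/-- The denoising objective
`f(x) = (1/2)·Σᵢ (xᵢ − yᵢ)² + μ·Σ_{i=1}^{n−1} (xᵢ − x_{i+1})²`. -/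
noncomputable def denoiseObj (n : ℕ) (hn : 2 ≤ n) (y : Fin n → ℝ) (μ : ℝ)
    (x : Fin n → ℝ) : ℝ :=
  (1 / 2) * ∑ i, (x i - y i) ^ 2 +
    μ * ∑ i : Fin (n - 1),
      (x ⟨i.val, by have := i.isLt; omega⟩ - x ⟨i.val + 1, by have := i.isLt; omega⟩) ^ 2

lemma sq_comb_le (a b s t : ℝ) (ha : 0 ≤ a) (hb : 0 ≤ b) (hab : a + b = 1) :
    (a * s + b * t) ^ 2 ≤ a * s ^ 2 + b * t ^ 2 := by
  nlinarith [mul_nonneg (mul_nonneg ha hb) (sq_nonneg (s - t))]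

lemma maxmin_sq_eq (a b c : ℝ) :
    (max a b - c) ^ 2 + (min a b - c) ^ 2 = (a - c) ^ 2 + (b - c) ^ 2 := by
  rcases le_total a b with h | h <;>
    simp [max_eq_right, max_eq_left, min_eq_left, min_eq_right, h] <;> ring

lemma maxmin_diff_sq_le (a b c d : ℝ) :
    (max a c - max b d) ^ 2 + (min a c - min b d) ^ 2 ≤ (a - b) ^ 2 + (c - d) ^ 2 := by
  rcases le_total a c with h | h <;> rcases le_total b d with h' | h' <;>
    simp [max_eq_right, max_eq_left, min_eq_left, min_eq_right, h, h'] <;>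
    nlinarith [mul_nonneg (sub_nonneg.2 h) (sub_nonneg.2 h')]

/-- For `μ ≥ 0`, the denoising objective is convex on `ℝⁿ` and submodular with
respect to the componentwise order. -/
theorem denoiseObj_convex_submodular
    (n : ℕ) (hn : 2 ≤ n) (y : Fin n → ℝ) (μ : ℝ) (hμ : 0 ≤ μ) :
    ConvexOn ℝ Set.univ (denoiseObj n hn y μ) ∧
    (∀ x x' : Fin n → ℝ,
      denoiseObj n hn y μ (x ⊔ x') + denoiseObj n hn y μ (x ⊓ x') ≤
      denoiseObj n hn y μ x + denoiseObj n hn y μ x') := by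
  constructor
  · refine ⟨convex_univ, fun x _ x' _ a b ha hb hab => ?_⟩
    simp only [denoiseObj, Pi.add_apply, Pi.smul_apply, smul_eq_mul]
    have h1 : ∑ i, (a * x i + b * x' i - y i) ^ 2 ≤
        a * ∑ i, (x i - y i) ^ 2 + b * ∑ i, (x' i - y i) ^ 2 := by
      rw [Finset.mul_sum, Finset.mul_sum, ← Finset.sum_add_distrib]
      refine Finset.sum_le_sum fun i _ => ?_
      have h : a * x i + b * x' i - y i = a * (x i - y i) + b * (x' i - y i) := by
        have : a * y i + b * y i = y i := by
          have := congrArg (· * y i) hab; simpa [add_mul] using this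
        ring_nf
        nlinarith [this]
      rw [h]
      exact sq_comb_le a b _ _ ha hb hab
    have h2 : ∑ i : Fin (n - 1),
        ((a * x ⟨i.val, by have := i.isLt; omega⟩ + b * x' ⟨i.val, by have := i.isLt; omega⟩) -
         (a * x ⟨i.val + 1, by have := i.isLt; omega⟩ + b * x' ⟨i.val + 1, by have := i.isLt; omega⟩)) ^ 2 ≤
        a * ∑ i : Fin (n - 1), (x ⟨i.val, by have := i.isLt; omega⟩ - x ⟨i.val + 1, by have := i.isLt; omega⟩) ^ 2 +
        b * ∑ i : Fin (n - 1), (x' ⟨i.val, by have := i.isLt; omega⟩ - x' ⟨i.val + 1, by have := i.isLt; omega⟩) ^ 2 := by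
      rw [Finset.mul_sum, Finset.mul_sum, ← Finset.sum_add_distrib]
      refine Finset.sum_le_sum fun i _ => ?_
      have h : (a * x ⟨i.val, by have := i.isLt; omega⟩ + b * x' ⟨i.val, by have := i.isLt; omega⟩) -
          (a * x ⟨i.val + 1, by have := i.isLt; omega⟩ + b * x' ⟨i.val + 1, by have := i.isLt; omega⟩) =
          a * (x ⟨i.val, by have := i.isLt; omega⟩ - x ⟨i.val + 1, by have := i.isLt; omega⟩) +
          b * (x' ⟨i.val, by have := i.isLt; omega⟩ - x' ⟨i.val + 1, by have := i.isLt; omega⟩) := by ring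
      rw [h]
      exact sq_comb_le a b _ _ ha hb hab
    have := mul_le_mul_of_nonneg_left h2 hμ
    nlinarith [this, h1]
  · intro x x'
    simp only [denoiseObj, Pi.sup_apply, Pi.inf_apply]
    have h1 : ∑ i, (max (x i) (x' i) - y i) ^ 2 + ∑ i, (min (x i) (x' i) - y i) ^ 2 =
        ∑ i, (x i - y i) ^ 2 + ∑ i, (x' i - y i) ^ 2 := by
      rw [← Finset.sum_add_distrib, ← Finset.sum_add_distrib]
      exact Finset.sum_congr rfl fun i _ => maxmin_sq_eq _ _ _
    have h2 : ∑ i : Fin (n - 1),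
          (max (x ⟨i.val, by have := i.isLt; omega⟩) (x' ⟨i.val, by have := i.isLt; omega⟩) -
           max (x ⟨i.val + 1, by have := i.isLt; omega⟩) (x' ⟨i.val + 1, by have := i.isLt; omega⟩)) ^ 2 +
        ∑ i : Fin (n - 1),
          (min (x ⟨i.val, by have := i.isLt; omega⟩) (x' ⟨i.val, by have := i.isLt; omega⟩) -
           min (x ⟨i.val + 1, by have := i.isLt; omega⟩) (x' ⟨i.val + 1, by have := i.isLt; omega⟩)) ^ 2 ≤
        ∑ i : Fin (n - 1), (x ⟨i.val, by have := i.isLt; omega⟩ - x ⟨i.val + 1, by have := i.isLt; omega⟩) ^ 2 +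
        ∑ i : Fin (n - 1), (x' ⟨i.val, by have := i.isLt; omega⟩ - x' ⟨i.val + 1, by have := i.isLt; omega⟩) ^ 2 := by
      rw [← Finset.sum_add_distrib, ← Finset.sum_add_distrib]
      exact Finset.sum_le_sum fun i _ => maxmin_diff_sq_le _ _ _ _
    have := mul_le_mul_of_nonneg_left h2 hμ
    nlinarith [this, h1]
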